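/- arXiv:2106.04881 — 2 statements merged into one kernel-verified Lean document; each statement's English description precedes it below -/
import Mathlib

section
/- Consider the non-convex robust regression loss ℓ(w,(a,y)) = ρ_exp(y − ⟨w,a⟩) + λ_r‖w‖²/2 with ρ_exp(t) = 1 − e^{−t²/t₀}, t₀ > 0, λ_r > 0, data z_i = (a_i,y_i), R := max_i ‖a_i‖ satisfying R < √(λ_r t₀ m / (2M)), and preconditioned SGD with a fixed symmetric positive definite matrix H satisfying mI ⪯ H ⪯ MI for some 0 < m ≤ M. Assume the step-size satisfies 0 < η < m/(λ_r + 2R²/t₀). Let μ be any Borel probability measure on ℝ^d invariant under the preconditioned SGD iterated function system with batch size b (so m_b = n/b batches). Then dim̄_H μ ≤ log(n/b) / log(1/(1 − η M^{−1} λ_r + η m^{−1} R² (2/t₀))). -/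
open MeasureTheory Filter Topology InnerProductSpace
open scoped ENNReal NNReal RealInnerProductSpace

lemma psd_cs {E : Type*} [NormedAddCommGroup E] [InnerProductSpace ℝ E]
    (T : E →ₗ[ℝ] E) (hsym : ∀ u v : E, ⟪T u, v⟫ = ⟪u, T v⟫)
    (hpos : ∀ v : E, 0 ≤ ⟪v, T v⟫) (u v : E) :
    ⟪u, T v⟫ ^ 2 ≤ ⟪u, T u⟫ * ⟪v, T v⟫ := by
  have key : ∀ t : ℝ, 0 ≤ ⟪v, T v⟫ * (t * t) + (2 * ⟪u, T v⟫) * t + ⟪u, T u⟫ := by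
    intro t
    have h0 := hpos (u + t • v)
    have hexp : ⟪u + t • v, T (u + t • v)⟫
        = ⟪v, T v⟫ * (t * t) + (2 * ⟪u, T v⟫) * t + ⟪u, T u⟫ := by
      have h1 : ⟪v, T u⟫ = ⟪u, T v⟫ := by
        rw [← hsym u v, real_inner_comm]
      simp only [T.map_add, T.map_smul, inner_add_left, inner_add_right,
        real_inner_smul_left, real_inner_smul_right, h1]
      ring
    linarith [hexp ▸ h0]
  have hd := discrim_le_zero key
  rw [discrim] at hd
  nlinarith [hd]

lemma norm_le_of_qf {E : Type*} [NormedAddCommGroup E] [InnerProductSpace ℝ E]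
    (T : E →ₗ[ℝ] E) (hsym : ∀ u v : E, ⟪T u, v⟫ = ⟪u, T v⟫)
    (hpos : ∀ v : E, 0 ≤ ⟪v, T v⟫) (c : ℝ)
    (hub : ∀ v : E, ⟪v, T v⟫ ≤ c * ‖v‖ ^ 2) (v : E) : ‖T v‖ ≤ c * ‖v‖ := by
  rcases eq_or_ne v 0 with rfl | hv
  · simp
  have hvpos : (0:ℝ) < ‖v‖ := norm_pos_iff.2 hv
  have hc : 0 ≤ c := by
    have h1 := hpos v
    have h2 := hub v
    nlinarith [pow_pos hvpos 2]
  rcases eq_or_ne (T v) 0 with hTv | hTv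
  · rw [hTv]; simpa using by positivity
  have hcs := psd_cs T hsym hpos (T v) v
  have h1 : ⟪T v, T v⟫ = ‖T v‖ ^ 2 := real_inner_self_eq_norm_sq _
  have h2 := hub (T v)
  have h3 := hub v
  have h4 := hpos v
  have hTvpos : (0:ℝ) < ‖T v‖ := norm_pos_iff.2 hTv
  rw [h1] at hcs
  have hmul : ⟪T v, T (T v)⟫ * ⟪v, T v⟫ ≤ (c * ‖T v‖ ^ 2) * (c * ‖v‖ ^ 2) :=
    mul_le_mul h2 h3 h4 (by positivity)
  have h5 : ‖T v‖ ^ 2 * ‖T v‖ ^ 2 ≤ (c * ‖v‖) ^ 2 * ‖T v‖ ^ 2 := by nlinarith [hcs, hmul]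
  have h6 : ‖T v‖ ^ 2 ≤ (c * ‖v‖) ^ 2 := le_of_mul_le_mul_right (by nlinarith [h5]) (pow_pos hTvpos 2)
  nlinarith [h6, mul_nonneg hc hvpos.le]


lemma exp_bound_aux {x : ℝ} (hx : 0 ≤ x) : |1 - 2 * x| ≤ Real.exp x := by
  have h1 : 1 ≤ Real.exp x := Real.one_le_exp hx
  have h2 : x / 2 + 1 ≤ Real.exp (x / 2) := by
    have := Real.add_one_le_exp (x / 2); linarith
  have h3 : (x / 2 + 1) ^ 2 ≤ Real.exp (x / 2) ^ 2 := by
    have h0 : (0:ℝ) ≤ x / 2 + 1 := by linarith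
    nlinarith [Real.exp_pos (x/2)]
  have h4 : Real.exp (x / 2) ^ 2 = Real.exp x := by
    rw [sq, ← Real.exp_add]; ring_nf
  rw [abs_le]
  constructor <;> nlinarith [h3, h4, sq_nonneg (x / 2 - 1)]


lemma psi_lip {t₀ : ℝ} (ht₀ : 0 < t₀) (u₁ u₂ : ℝ) :
    |(2 * u₁ / t₀ * Real.exp (-u₁ ^ 2 / t₀)) -
      (2 * u₂ / t₀ * Real.exp (-u₂ ^ 2 / t₀))| ≤ 2 / t₀ * |u₁ - u₂| := by
  set g : ℝ → ℝ := fun u => 2 * u / t₀ * Real.exp (-u ^ 2 / t₀) with hg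
  set g' : ℝ → ℝ := fun u => 2 / t₀ * Real.exp (-u ^ 2 / t₀) * (1 - 2 * u ^ 2 / t₀) with hg'
  have hderiv : ∀ u ∈ Set.univ, HasDerivWithinAt g (g' u) Set.univ u := by
    intro u _
    have h1 : HasDerivAt (fun u : ℝ => 2 * u / t₀) (2 / t₀) u := by
      simpa using ((hasDerivAt_id u).const_mul 2).div_const t₀
    have h2 : HasDerivAt (fun u : ℝ => -u ^ 2 / t₀) (-(2 * u ^ 1) / t₀) u := by
      simpa using (hasDerivAt_pow 2 u).neg.div_const t₀
    have h3 := h2.exp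
    have h4 := h1.mul h3
    refine (h4.congr_deriv ?_).hasDerivWithinAt
    simp only [hg']
    ring
  have hbound : ∀ u ∈ Set.univ, ‖g' u‖ ≤ 2 / t₀ := by
    intro u _
    have hx : 0 ≤ u ^ 2 / t₀ := by positivity
    have h := exp_bound_aux hx
    simp only [hg', Real.norm_eq_abs]
    have hexp : -u ^ 2 / t₀ = -(u ^ 2 / t₀) := by ring
    rw [hexp, abs_mul, abs_mul, Real.abs_exp, abs_of_pos (by positivity : (0:ℝ) < 2 / t₀)]
    have h2 : Real.exp (-(u ^ 2 / t₀)) * |1 - 2 * (u ^ 2 / t₀)| ≤ 1 := by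
      calc Real.exp (-(u ^ 2 / t₀)) * |1 - 2 * (u ^ 2 / t₀)|
          ≤ Real.exp (-(u ^ 2 / t₀)) * Real.exp (u ^ 2 / t₀) :=
            mul_le_mul_of_nonneg_left h (Real.exp_pos _).le
        _ = 1 := by rw [← Real.exp_add]; simp
    have h3 : |1 - 2 * u ^ 2 / t₀| = |1 - 2 * (u ^ 2 / t₀)| := by ring_nf
    rw [h3]
    nlinarith [h2, abs_nonneg (1 - 2 * (u ^ 2 / t₀)), Real.exp_pos (-(u ^ 2 / t₀)),
      (by positivity : (0:ℝ) < 2 / t₀)]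
  have hmvt := Convex.norm_image_sub_le_of_norm_hasDerivWithin_le hderiv hbound convex_univ
    (Set.mem_univ u₂) (Set.mem_univ u₁)
  simpa [hg, Real.norm_eq_abs] using hmvt

section Matrixfacts
variable {d : ℕ} (H : Matrix (Fin d) (Fin d) ℝ)

-- inner and quadratic form bridge
lemma inner_toEuclideanLin (v : EuclideanSpace ℝ (Fin d)) :
    ⟪v, Matrix.toEuclideanLin H v⟫ =
      dotProduct (WithLp.equiv 2 (Fin d → ℝ) v) (H.mulVec (WithLp.equiv 2 (Fin d → ℝ) v)) := by
  rw [EuclideanSpace.inner_eq_star_dotProduct]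
  simp [Matrix.toEuclideanLin_apply, dotProduct, mul_comm]

lemma qf_lb {cm : ℝ} (hHlow : (H - cm • (1 : Matrix (Fin d) (Fin d) ℝ)).PosSemidef)
    (v : EuclideanSpace ℝ (Fin d)) :
    cm * ‖v‖ ^ 2 ≤ ⟪v, Matrix.toEuclideanLin H v⟫ := by
  have h := hHlow.dotProduct_mulVec_nonneg (WithLp.equiv 2 (Fin d → ℝ) v)
  rw [Matrix.sub_mulVec, Matrix.smul_mulVec, Matrix.one_mulVec] at h
  rw [dotProduct_sub, dotProduct_smul] at h
  simp only [star_trivial, smul_eq_mul] at h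
  have hvv : dotProduct (WithLp.equiv 2 (Fin d → ℝ) v) (WithLp.equiv 2 (Fin d → ℝ) v)
      = ‖v‖ ^ 2 := by
    rw [← real_inner_self_eq_norm_sq]
    rw [EuclideanSpace.inner_eq_star_dotProduct]
    simp [dotProduct]
  rw [inner_toEuclideanLin]
  rw [hvv] at h
  linarith
end Matrixfacts

section Matrixfacts2
variable {d : ℕ} {H : Matrix (Fin d) (Fin d) ℝ}

lemma qf_ub {cM : ℝ} (hHhigh : ((cM • (1 : Matrix (Fin d) (Fin d) ℝ)) - H).PosSemidef)
    (v : EuclideanSpace ℝ (Fin d)) :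
    ⟪v, Matrix.toEuclideanLin H v⟫ ≤ cM * ‖v‖ ^ 2 := by
  have h := hHhigh.dotProduct_mulVec_nonneg (WithLp.equiv 2 (Fin d → ℝ) v)
  rw [Matrix.sub_mulVec, Matrix.smul_mulVec, Matrix.one_mulVec] at h
  rw [dotProduct_sub, dotProduct_smul] at h
  simp only [star_trivial, smul_eq_mul] at h
  have hvv : dotProduct (WithLp.equiv 2 (Fin d → ℝ) v) (WithLp.equiv 2 (Fin d → ℝ) v)
      = ‖v‖ ^ 2 := by
    rw [← real_inner_self_eq_norm_sq, EuclideanSpace.inner_eq_star_dotProduct]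
    simp [dotProduct]
  rw [inner_toEuclideanLin]
  rw [hvv] at h
  linarith

lemma toEuclideanLin_inv_comp (hdet : IsUnit H.det) (v : EuclideanSpace ℝ (Fin d)) :
    Matrix.toEuclideanLin H⁻¹ (Matrix.toEuclideanLin H v) = v := by
  simp only [Matrix.toEuclideanLin_apply]
  simp [Matrix.mulVec_mulVec, Matrix.nonsing_inv_mul H hdet]

lemma toEuclideanLin_comp_inv (hdet : IsUnit H.det) (v : EuclideanSpace ℝ (Fin d)) :
    Matrix.toEuclideanLin H (Matrix.toEuclideanLin H⁻¹ v) = v := by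
  simp only [Matrix.toEuclideanLin_apply]
  simp [Matrix.mulVec_mulVec, Matrix.mul_nonsing_inv H hdet]

lemma sym_toEuclideanLin (hH : H.IsHermitian) (u v : EuclideanSpace ℝ (Fin d)) :
    ⟪Matrix.toEuclideanLin H u, v⟫ = ⟪u, Matrix.toEuclideanLin H v⟫ :=
  (Matrix.isHermitian_iff_isSymmetric.1 hH) u v
end Matrixfacts2

section Matrixfacts3
variable {d : ℕ} {H : Matrix (Fin d) (Fin d) ℝ} {cm cM : ℝ}

lemma qf_inv_bounds (hcm : 0 < cm) (hcM : 0 < cM) (hHpd : H.PosDef)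
    (hHlow : (H - cm • (1 : Matrix (Fin d) (Fin d) ℝ)).PosSemidef)
    (hHhigh : ((cM • (1 : Matrix (Fin d) (Fin d) ℝ)) - H).PosSemidef)
    (x : EuclideanSpace ℝ (Fin d)) :
    cM⁻¹ * ‖x‖ ^ 2 ≤ ⟪x, Matrix.toEuclideanLin H⁻¹ x⟫ ∧
      ⟪x, Matrix.toEuclideanLin H⁻¹ x⟫ ≤ cm⁻¹ * ‖x‖ ^ 2 := by
  have hdet : IsUnit H.det := isUnit_iff_ne_zero.2 hHpd.det_pos.ne'
  have hsymH := sym_toEuclideanLin hHpd.isHermitian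
  set TH := Matrix.toEuclideanLin H
  set T := Matrix.toEuclideanLin H⁻¹
  set y := T x with hy
  have hxy : TH y = x := toEuclideanLin_comp_inv hdet x
  have hTx : ⟪x, T x⟫ = ⟪y, TH y⟫ := by
    rw [← hy, ← hxy]
    exact real_inner_comm _ _
  rcases eq_or_ne y 0 with hy0 | hy0
  · have hx0 : x = 0 := by rw [← hxy, hy0, map_zero]
    rw [hTx, hy0, hx0]
    simp
  · have hypos : (0:ℝ) < ‖y‖ := norm_pos_iff.2 hy0
    have hlb := qf_lb H hHlow y
    have hub := qf_ub hHhigh y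
    have hcs : ⟪y, TH y⟫ ≤ ‖x‖ * ‖y‖ := by
      calc ⟪y, TH y⟫ ≤ ‖y‖ * ‖TH y‖ := real_inner_le_norm y (TH y)
        _ = ‖x‖ * ‖y‖ := by rw [hxy]; ring
    constructor
    · -- lower bound via CS for the PSD form of TH
      have hpos : ∀ v : EuclideanSpace ℝ (Fin d), 0 ≤ ⟪v, TH v⟫ := fun v => by
        have := qf_lb H hHlow v; nlinarith [sq_nonneg ‖v‖]
      have hcs2 := psd_cs TH hsymH hpos x y
      have h1 : ⟪x, TH y⟫ = ‖x‖ ^ 2 := by rw [hxy, real_inner_self_eq_norm_sq]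
      have h2 : ⟪x, TH x⟫ ≤ cM * ‖x‖ ^ 2 := qf_ub hHhigh x
      rw [h1] at hcs2
      rcases eq_or_ne x 0 with hx0 | hx0
      · rw [hx0]; simp
      · have hxpos : (0:ℝ) < ‖x‖ := norm_pos_iff.2 hx0
        rw [hTx]
        have h4 : ⟪x, TH x⟫ * ⟪y, TH y⟫ ≤ (cM * ‖x‖ ^ 2) * ⟪y, TH y⟫ :=
          mul_le_mul_of_nonneg_right h2 (hpos y)
        rw [inv_mul_le_iff₀ hcM]
        nlinarith [hcs2, h4, pow_pos hxpos 2, hpos y]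
    · rw [hTx]
      have h3 : cm * ‖y‖ ≤ ‖x‖ := by
        nlinarith [hlb, hcs, hypos]
      calc ⟪y, TH y⟫ ≤ ‖x‖ * ‖y‖ := hcs
        _ ≤ ‖x‖ * (cm⁻¹ * ‖x‖) := by
            apply mul_le_mul_of_nonneg_left _ (norm_nonneg x)
            rw [le_inv_mul_iff₀ hcm]
            linarith [h3]
        _ = cm⁻¹ * ‖x‖ ^ 2 := by ring
end Matrixfacts3

section Lip
variable {d : ℕ} {H : Matrix (Fin d) (Fin d) ℝ} {cm cM : ℝ}

lemma norm_toEuclideanLin_inv_le (hcm : 0 < cm) (hcM : 0 < cM) (hHpd : H.PosDef)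
    (hHlow : (H - cm • (1 : Matrix (Fin d) (Fin d) ℝ)).PosSemidef)
    (hHhigh : ((cM • (1 : Matrix (Fin d) (Fin d) ℝ)) - H).PosSemidef)
    (x : EuclideanSpace ℝ (Fin d)) :
    ‖Matrix.toEuclideanLin H⁻¹ x‖ ≤ cm⁻¹ * ‖x‖ := by
  apply norm_le_of_qf _ (sym_toEuclideanLin hHpd.isHermitian.inv)
  · intro v
    have := (qf_inv_bounds hcm hcM hHpd hHlow hHhigh v).1
    nlinarith [sq_nonneg ‖v‖, inv_pos.2 hcM]
  · exact fun v => (qf_inv_bounds hcm hcM hHpd hHlow hHhigh v).2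

lemma norm_amap_le (hcm : 0 < cm) (hcM : 0 < cM) (hHpd : H.PosDef)
    (hHlow : (H - cm • (1 : Matrix (Fin d) (Fin d) ℝ)).PosSemidef)
    (hHhigh : ((cM • (1 : Matrix (Fin d) (Fin d) ℝ)) - H).PosSemidef)
    {η lamr : ℝ} (hη : 0 ≤ η) (hlamr : 0 ≤ lamr) (hηlamr : η * lamr ≤ cm)
    (x : EuclideanSpace ℝ (Fin d)) :
    ‖x - (η * lamr) • Matrix.toEuclideanLin H⁻¹ x‖ ≤ (1 - η * lamr * cM⁻¹) * ‖x‖ := by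
  set T := Matrix.toEuclideanLin H⁻¹ with hT
  have hTsym := sym_toEuclideanLin (H := H⁻¹) hHpd.isHermitian.inv
  set A : EuclideanSpace ℝ (Fin d) →ₗ[ℝ] EuclideanSpace ℝ (Fin d) :=
    LinearMap.id - (η * lamr) • T with hA
  have hAapp : ∀ x, A x = x - (η * lamr) • T x := fun x => rfl
  have hAsym : ∀ u v : EuclideanSpace ℝ (Fin d), ⟪A u, v⟫ = ⟪u, A v⟫ := by
    intro u v
    simp only [hAapp, inner_sub_left, inner_sub_right, real_inner_smul_left,
      real_inner_smul_right, hTsym]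
    rw [hT, hTsym]
  have hbounds := fun v => qf_inv_bounds hcm hcM hHpd hHlow hHhigh v
  have hη1 : η * lamr * cm⁻¹ ≤ 1 := by
    have : η * lamr * cm⁻¹ ≤ cm * cm⁻¹ := mul_le_mul_of_nonneg_right hηlamr (inv_pos.2 hcm).le
    rwa [mul_inv_cancel₀ hcm.ne'] at this
  have hApos : ∀ v : EuclideanSpace ℝ (Fin d), 0 ≤ ⟪v, A v⟫ := by
    intro v
    have h1 := (hbounds v).2
    have h2 : ⟪v, A v⟫ = ‖v‖ ^ 2 - (η * lamr) * ⟪v, T v⟫ := by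
      simp only [hAapp, inner_sub_right, real_inner_smul_right, real_inner_self_eq_norm_sq]
    rw [h2]
    have h3 : (η * lamr) * ⟪v, T v⟫ ≤ (η * lamr) * (cm⁻¹ * ‖v‖ ^ 2) :=
      mul_le_mul_of_nonneg_left h1 (by positivity)
    nlinarith [sq_nonneg ‖v‖]
  have hAub : ∀ v : EuclideanSpace ℝ (Fin d), ⟪v, A v⟫ ≤ (1 - η * lamr * cM⁻¹) * ‖v‖ ^ 2 := by
    intro v
    have h1 := (hbounds v).1
    have h2 : ⟪v, A v⟫ = ‖v‖ ^ 2 - (η * lamr) * ⟪v, T v⟫ := by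
      simp only [hAapp, inner_sub_right, real_inner_smul_right, real_inner_self_eq_norm_sq]
    rw [h2]
    have h3 : (η * lamr) * (cM⁻¹ * ‖v‖ ^ 2) ≤ (η * lamr) * ⟪v, T v⟫ :=
      mul_le_mul_of_nonneg_left h1 (by positivity)
    nlinarith
  have := norm_le_of_qf A hAsym hApos _ hAub x
  simpa [hAapp] using this
end Lip

section StepLip
variable {d : ℕ} {H : Matrix (Fin d) (Fin d) ℝ} {cm cM : ℝ}

lemma step_lip {ι : Type*} (t₀ lamr η R : ℝ) (b : ℕ) (hb : 0 < b) (ht₀ : 0 < t₀)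
    (hlamr : 0 < lamr) (hcm : 0 < cm) (hcM : 0 < cM) (hη : 0 < η) (hηlamr : η * lamr ≤ cm)
    (hHpd : H.PosDef)
    (hHlow : (H - cm • (1 : Matrix (Fin d) (Fin d) ℝ)).PosSemidef)
    (hHhigh : ((cM • (1 : Matrix (Fin d) (Fin d) ℝ)) - H).PosSemidef)
    (S : Finset ι) (hcard : S.card = b)
    (av : ι → EuclideanSpace ℝ (Fin d)) (yv : ι → ℝ)
    (hRb : ∀ j ∈ S, ‖av j‖ ≤ R) (hR0 : 0 ≤ R)
    (w₁ w₂ : EuclideanSpace ℝ (Fin d)) :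
    ‖(w₁ - (η / b) • Matrix.toEuclideanLin H⁻¹ (∑ j ∈ S,
        ((-(2 * (yv j - ⟪w₁, av j⟫) / t₀ * Real.exp (-(yv j - ⟪w₁, av j⟫) ^ 2 / t₀))) • av j
          + lamr • w₁))) -
      (w₂ - (η / b) • Matrix.toEuclideanLin H⁻¹ (∑ j ∈ S,
        ((-(2 * (yv j - ⟪w₂, av j⟫) / t₀ * Real.exp (-(yv j - ⟪w₂, av j⟫) ^ 2 / t₀))) • av j
          + lamr • w₂)))‖
      ≤ (1 - η * cM⁻¹ * lamr + η * cm⁻¹ * R ^ 2 * (2 / t₀)) * ‖w₁ - w₂‖ := by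
  set T := Matrix.toEuclideanLin H⁻¹ with hT
  set v := w₁ - w₂ with hv
  set c₁ : ι → ℝ := fun j => -(2 * (yv j - ⟪w₁, av j⟫) / t₀ *
    Real.exp (-(yv j - ⟪w₁, av j⟫) ^ 2 / t₀)) with hc₁
  set c₂ : ι → ℝ := fun j => -(2 * (yv j - ⟪w₂, av j⟫) / t₀ *
    Real.exp (-(yv j - ⟪w₂, av j⟫) ^ 2 / t₀)) with hc₂
  have hbne : (b : ℝ) ≠ 0 := Nat.cast_ne_zero.2 hb.ne'
  -- rewrite the difference
  have hkey : (w₁ - (η / b) • T (∑ j ∈ S, (c₁ j • av j + lamr • w₁))) -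
      (w₂ - (η / b) • T (∑ j ∈ S, (c₂ j • av j + lamr • w₂)))
      = (v - (η * lamr) • T v) - (η / b) • (∑ j ∈ S, (c₁ j - c₂ j) • T (av j)) := by
    have e1 : ∀ w : EuclideanSpace ℝ (Fin d), ∀ c : ι → ℝ,
        T (∑ j ∈ S, (c j • av j + lamr • w)) =
          (∑ j ∈ S, c j • T (av j)) + (b : ℝ) • (lamr • T w) := by
      intro w c
      rw [map_sum]
      have : ∀ j ∈ S, T (c j • av j + lamr • w) = c j • T (av j) + lamr • T w := by
        intro j _
        simp only [map_add, LinearMap.map_smul]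
      rw [Finset.sum_congr rfl this, Finset.sum_add_distrib, Finset.sum_const, hcard]
      simp [← Nat.cast_smul_eq_nsmul ℝ, smul_smul, mul_comm]
    rw [e1 w₁ c₁, e1 w₂ c₂]
    have e2 : (η / b) • ((b : ℝ) • (lamr • T w₁)) = (η * lamr) • T w₁ := by
      rw [smul_smul, smul_smul]
      congr 1
      field_simp
    have e3 : (η / b) • ((b : ℝ) • (lamr • T w₂)) = (η * lamr) • T w₂ := by
      rw [smul_smul, smul_smul]
      congr 1
      field_simp
    have e4 : ∑ j ∈ S, (c₁ j - c₂ j) • T (av j)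
        = (∑ j ∈ S, c₁ j • T (av j)) - ∑ j ∈ S, c₂ j • T (av j) := by
      rw [← Finset.sum_sub_distrib]
      congr 1
      ext j
      rw [sub_smul]
    rw [smul_add, smul_add, e2, e3, e4, smul_sub]
    have : T v = T w₁ - T w₂ := by rw [hv, map_sub]
    rw [this]
    module
  rw [hkey]
  have h1 : ‖v - (η * lamr) • T v‖ ≤ (1 - η * lamr * cM⁻¹) * ‖v‖ :=
    norm_amap_le hcm hcM hHpd hHlow hHhigh hη.le hlamr.le hηlamr v
  have h2 : ‖(η / b) • (∑ j ∈ S, (c₁ j - c₂ j) • T (av j))‖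
      ≤ (η / b) * (b * (2 / t₀ * (‖v‖ * R) * (cm⁻¹ * R))) := by
    rw [norm_smul, Real.norm_eq_abs, abs_of_pos (by positivity : (0:ℝ) < η / b)]
    apply mul_le_mul_of_nonneg_left _ (by positivity : (0:ℝ) ≤ η / b)
    calc ‖∑ j ∈ S, (c₁ j - c₂ j) • T (av j)‖
        ≤ ∑ j ∈ S, ‖(c₁ j - c₂ j) • T (av j)‖ := norm_sum_le _ _
      _ ≤ ∑ j ∈ S, (2 / t₀ * (‖v‖ * R) * (cm⁻¹ * R)) := by
          apply Finset.sum_le_sum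
          intro j hj
          rw [norm_smul, Real.norm_eq_abs]
          have hdc : |c₁ j - c₂ j| ≤ 2 / t₀ * (‖v‖ * R) := by
            have hpl := psi_lip ht₀ (yv j - ⟪w₁, av j⟫) (yv j - ⟪w₂, av j⟫)
            have he : c₁ j - c₂ j = -((2 * (yv j - ⟪w₁, av j⟫) / t₀ *
                Real.exp (-(yv j - ⟪w₁, av j⟫) ^ 2 / t₀)) -
                (2 * (yv j - ⟪w₂, av j⟫) / t₀ *
                Real.exp (-(yv j - ⟪w₂, av j⟫) ^ 2 / t₀))) := by
              rw [hc₁, hc₂]; ring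
            rw [he, abs_neg]
            refine hpl.trans ?_
            apply mul_le_mul_of_nonneg_left _ (by positivity : (0:ℝ) ≤ 2 / t₀)
            have hu : (yv j - ⟪w₁, av j⟫) - (yv j - ⟪w₂, av j⟫) = -⟪v, av j⟫ := by
              rw [hv, inner_sub_left]; ring
            rw [hu, abs_neg]
            calc |⟪v, av j⟫| ≤ ‖v‖ * ‖av j‖ := abs_real_inner_le_norm v (av j)
              _ ≤ ‖v‖ * R := mul_le_mul_of_nonneg_left (hRb j hj) (norm_nonneg v)
          have hTa : ‖T (av j)‖ ≤ cm⁻¹ * R := by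
            refine (norm_toEuclideanLin_inv_le hcm hcM hHpd hHlow hHhigh (av j)).trans ?_
            exact mul_le_mul_of_nonneg_left (hRb j hj) (inv_pos.2 hcm).le
          exact mul_le_mul hdc hTa (norm_nonneg _) (by positivity)
      _ = b * (2 / t₀ * (‖v‖ * R) * (cm⁻¹ * R)) := by
          rw [Finset.sum_const, hcard, nsmul_eq_mul]
  calc ‖(v - (η * lamr) • T v) - (η / b) • (∑ j ∈ S, (c₁ j - c₂ j) • T (av j))‖
      ≤ ‖v - (η * lamr) • T v‖ + ‖(η / b) • (∑ j ∈ S, (c₁ j - c₂ j) • T (av j))‖ :=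
        norm_sub_le _ _
    _ ≤ (1 - η * lamr * cM⁻¹) * ‖v‖ + (η / b) * (b * (2 / t₀ * (‖v‖ * R) * (cm⁻¹ * R))) := by
        linarith [h1, h2]
    _ = (1 - η * cM⁻¹ * lamr + η * cm⁻¹ * R ^ 2 * (2 / t₀)) * ‖v‖ := by
        field_simp
end StepLip

lemma psi_deriv (t₀ yj : ℝ) (s : ℝ) :
    HasDerivAt (fun s : ℝ => 1 - Real.exp (-(yj - s) ^ 2 / t₀))
      (-(2 * (yj - s) / t₀ * Real.exp (-(yj - s) ^ 2 / t₀))) s := by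
  have hd1 : HasDerivAt (fun s : ℝ => yj - s) (-1) s := (hasDerivAt_id s).const_sub yj
  have hd2 : HasDerivAt (fun s : ℝ => (yj - s) ^ 2) (2 * (yj - s) ^ 1 * (-1)) s := by
    simpa using hd1.fun_pow 2
  have hd3 : HasDerivAt (fun s : ℝ => -(yj - s) ^ 2 / t₀) (-(2 * (yj - s) ^ 1 * (-1)) / t₀) s :=
    hd2.neg.div_const t₀
  have hd4 := hd3.exp
  have hd5 := hd4.const_sub 1
  refine hd5.congr_deriv ?_
  ring

lemma grad_formula {d : ℕ} (t₀ lamr : ℝ) (aj : EuclideanSpace ℝ (Fin d)) (yj : ℝ)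
    (w : EuclideanSpace ℝ (Fin d)) :
    HasGradientAt (fun w' : EuclideanSpace ℝ (Fin d) =>
      (1 - Real.exp (-(yj - ⟪w', aj⟫) ^ 2 / t₀)) + lamr * ‖w'‖ ^ 2 / 2)
      ((-(2 * (yj - ⟪w, aj⟫) / t₀ * Real.exp (-(yj - ⟪w, aj⟫) ^ 2 / t₀))) • aj + lamr • w) w := by
  set c : ℝ := -(2 * (yj - ⟪w, aj⟫) / t₀ * Real.exp (-(yj - ⟪w, aj⟫) ^ 2 / t₀)) with hc
  rw [hasGradientAt_iff_hasFDerivAt]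
  have hL : HasFDerivAt (fun w' : EuclideanSpace ℝ (Fin d) => ⟪w', aj⟫) (innerSL ℝ aj) w := by
    have h0 : (fun w' : EuclideanSpace ℝ (Fin d) => ⟪w', aj⟫) = ⇑(innerSL ℝ aj) :=
      funext fun w' => by rw [real_inner_comm]; rfl
    rw [h0]; exact (innerSL ℝ aj).hasFDerivAt
  have h1 : HasFDerivAt (fun w' : EuclideanSpace ℝ (Fin d) => 1 - Real.exp (-(yj - ⟪w', aj⟫) ^ 2 / t₀))
      (c • (innerSL ℝ aj : EuclideanSpace ℝ (Fin d) →L[ℝ] ℝ)) w := by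
    have := (psi_deriv t₀ yj ⟪w, aj⟫).comp_hasFDerivAt w hL; exact this
  have h_norm : HasFDerivAt (fun w' : EuclideanSpace ℝ (Fin d) => ⟪w', w'⟫)
      ((fderivInnerCLM ℝ ((w, w) : EuclideanSpace ℝ (Fin d) × EuclideanSpace ℝ (Fin d))).comp
        ((ContinuousLinearMap.id ℝ (EuclideanSpace ℝ (Fin d))).prod (ContinuousLinearMap.id ℝ (EuclideanSpace ℝ (Fin d))))) w :=
    (hasFDerivAt_id w).inner ℝ (hasFDerivAt_id w)
  have h2 : HasFDerivAt (fun w' : EuclideanSpace ℝ (Fin d) => lamr * ‖w'‖ ^ 2 / 2)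
      ((lamr / 2) • ((fderivInnerCLM ℝ ((w, w) : EuclideanSpace ℝ (Fin d) × EuclideanSpace ℝ (Fin d))).comp
        ((ContinuousLinearMap.id ℝ (EuclideanSpace ℝ (Fin d))).prod (ContinuousLinearMap.id ℝ (EuclideanSpace ℝ (Fin d)))))) w := by
    have hf : (fun w' : EuclideanSpace ℝ (Fin d) => lamr * ‖w'‖ ^ 2 / 2) = fun w' : EuclideanSpace ℝ (Fin d) => (lamr / 2) * ⟪w', w'⟫ :=
      funext fun w' => by rw [real_inner_self_eq_norm_sq]; ring
    rw [hf]
    exact h_norm.const_mul (lamr / 2)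
  have hsum := h1.add h2
  have heq : toDual ℝ (EuclideanSpace ℝ (Fin d)) (c • aj + lamr • w)
      = c • (innerSL ℝ aj : EuclideanSpace ℝ (Fin d) →L[ℝ] ℝ) + (lamr / 2) • ((fderivInnerCLM ℝ ((w, w) : EuclideanSpace ℝ (Fin d) × EuclideanSpace ℝ (Fin d))).comp
        ((ContinuousLinearMap.id ℝ (EuclideanSpace ℝ (Fin d))).prod (ContinuousLinearMap.id ℝ (EuclideanSpace ℝ (Fin d))))) := by
    ext v
    simp only [toDual_apply_apply, ContinuousLinearMap.add_apply, ContinuousLinearMap.smul_apply,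
      ContinuousLinearMap.comp_apply, ContinuousLinearMap.prod_apply,
      ContinuousLinearMap.id_apply, fderivInnerCLM_apply, innerSL_apply_apply,
      inner_add_left, real_inner_smul_left, smul_eq_mul]
    rw [real_inner_comm v w]
    ring
  rw [heq]
  exact hsum

/-- The upper Hausdorff dimension of a measure:
`dim̄_H μ := inf {dim_H A : A Borel, μ A = 1}`. -/
noncomputable def upperHausdorffDim {X : Type*} [EMetricSpace X] [MeasurableSpace X]
    (μ : Measure X) : ℝ≥0∞ :=
  ⨅ (A : Set X) (_ : MeasurableSet A) (_ : μ A = 1), dimH A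

lemma ifs_dim_bound {E : Type*} [NormedAddCommGroup E] [NormedSpace ℝ E]
    [FiniteDimensional ℝ E] [MeasurableSpace E] [BorelSpace E]
    {m : ℕ} (hm : 0 < m) (h : Fin m → E → E) (q : ℝ≥0) (hq0 : 0 < q) (hq1 : q < 1)
    (hlip : ∀ i, LipschitzWith q (h i))
    (p : Fin m → ℝ≥0∞) (hpsum : ∑ i, p i = 1)
    (μ : Measure E) [IsProbabilityMeasure μ]
    (hinv : μ = ∑ i, p i • μ.map (h i)) :
    upperHausdorffDim μ ≤ ENNReal.ofReal (Real.log m / Real.log (1 / (q : ℝ))) := by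
  classical
  set q' : ℝ := (q : ℝ) with hq'def
  have hq'0 : 0 < q' := hq0
  have hq'1 : q' < 1 := hq1
  haveI : Nonempty (Fin m) := Fin.pos_iff_nonempty.1 hm
  have hmeas_h : ∀ i, Measurable (h i) := fun i => (hlip i).continuous.measurable
  -- uniform bound on ‖h i 0‖
  obtain ⟨c, hc0, hc⟩ : ∃ c : ℝ, 0 ≤ c ∧ ∀ i, ‖h i 0‖ ≤ c := by
    refine ⟨Finset.univ.sup' Finset.univ_nonempty (fun i => ‖h i 0‖),
      le_trans (norm_nonneg (h (Classical.arbitrary _) 0))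
        (Finset.le_sup' (fun i => ‖h i 0‖) (Finset.mem_univ _)), ?_⟩
    exact fun i => Finset.le_sup' (fun i => ‖h i 0‖) (Finset.mem_univ i)
  set ρ₀ : ℝ := c / (1 - q') with hρ₀def
  have hρ₀ : 0 ≤ ρ₀ := div_nonneg hc0 (by linarith)
  -- invariance of balls
  have hmaps : ∀ ρ : ℝ, ρ₀ ≤ ρ → ∀ i,
      Set.MapsTo (h i) (Metric.closedBall 0 ρ) (Metric.closedBall 0 ρ) := by
    intro ρ hρ i x hx
    rw [Metric.mem_closedBall, dist_zero_right] at hx ⊢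
    have h1 : dist (h i x) (h i 0) ≤ q' * dist x 0 := (hlip i).dist_le_mul x 0
    rw [dist_zero_right] at h1
    have h2 : ‖h i x‖ ≤ ‖h i x - h i 0‖ + ‖h i 0‖ := by
      calc ‖h i x‖ = ‖(h i x - h i 0) + h i 0‖ := by rw [sub_add_cancel]
        _ ≤ ‖h i x - h i 0‖ + ‖h i 0‖ := norm_add_le _ _
    have h3 : ‖h i x - h i 0‖ = dist (h i x) (h i 0) := (dist_eq_norm _ _).symm
    have h4 : c ≤ ρ * (1 - q') := by
      rw [hρ₀def] at hρ
      exact (div_le_iff₀ (by linarith : (0:ℝ) < 1 - q')).1 hρ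
    nlinarith [hc i, hx, norm_nonneg x, hq'0]
  -- word maps
  set itf : List (Fin m) → E → E := fun l => l.foldr (fun i g => h i ∘ g) id with hitf
  have hitf_nil : itf [] = id := rfl
  have hitf_cons : ∀ i l, itf (i :: l) = h i ∘ itf l := fun i l => rfl
  have hitf_lip : ∀ l : List (Fin m), LipschitzWith (q ^ l.length) (itf l) := by
    intro l
    induction l with
    | nil => simpa [hitf_nil] using LipschitzWith.id
    | cons i l ih =>
        rw [hitf_cons, List.length_cons, pow_succ, mul_comm]
        exact (hlip i).comp ih
  -- the key construction for a given radius
  have key : ∀ ρ : ℝ, ρ₀ ≤ ρ → ∃ Λ : Set E, MeasurableSet Λ ∧ μ (Metric.closedBall 0 ρ) ≤ μ Λ ∧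
      dimH Λ ≤ ENNReal.ofReal (Real.log m / Real.log (1 / q')) := by
    intro ρ hρ
    have hρnn : 0 ≤ ρ := le_trans hρ₀ hρ
    set B : Set E := Metric.closedBall 0 ρ with hB
    set A : ℕ → Set E := fun k => ⋃ w : Fin k → Fin m, itf (List.ofFn w) '' B with hA
    have hA0 : A 0 = B := by
      apply Set.Subset.antisymm
      · exact Set.iUnion_subset fun w => by simp [hA, hitf_nil]
      · intro x hx
        exact Set.mem_iUnion.2 ⟨Fin.elim0, by simpa [hA, hitf_nil] using hx⟩
    have hAsucc : ∀ k, A (k + 1) = ⋃ i, h i '' A k := by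
      intro k
      ext x
      simp only [hA, Set.mem_iUnion, Set.mem_image]
      constructor
      · rintro ⟨w, z, hz, hx⟩
        refine ⟨w 0, itf (List.ofFn (Fin.tail w)) z, ⟨Fin.tail w, z, hz, rfl⟩, ?_⟩
        rw [← hx, List.ofFn_succ, hitf_cons]
        rfl
      · rintro ⟨i, z', ⟨w, z, hz, hz'⟩, hx⟩
        refine ⟨Fin.cons i w, z, hz, ?_⟩
        rw [List.ofFn_succ]
        simp only [Fin.cons_zero, Fin.cons_succ]
        rw [hitf_cons]
        rw [← hx, ← hz']
        rfl
    have hAcompact : ∀ k, IsCompact (A k) :=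
      fun k => isCompact_iUnion fun w =>
        (isCompact_closedBall 0 ρ).image (hitf_lip (List.ofFn w)).continuous
    have hAmeas : ∀ k, MeasurableSet (A k) := fun k => (hAcompact k).isClosed.measurableSet
    have hAsub : ∀ k, A (k + 1) ⊆ A k := by
      intro k
      induction k with
      | zero =>
          rw [hAsucc 0, hA0]
          exact Set.iUnion_subset fun i => (hmaps ρ hρ i).image_subset
      | succ k ih =>
          calc A (k + 2) = ⋃ i, h i '' A (k + 1) := hAsucc (k + 1)
            _ ⊆ ⋃ i, h i '' A k := Set.iUnion_mono fun i => Set.image_mono ih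
            _ = A (k + 1) := (hAsucc k).symm
    have hAanti : Antitone A := antitone_nat_of_succ_le hAsub
    have hmeasA : ∀ k, μ B ≤ μ (A k) := by
      intro k
      induction k with
      | zero => rw [hA0]
      | succ k ih =>
          have happ : μ (A (k + 1)) = ∑ i, p i * μ (h i ⁻¹' A (k + 1)) := by
            conv_lhs => rw [hinv]
            rw [Measure.finset_sum_apply]
            congr 1
            ext i
            rw [Measure.smul_apply, smul_eq_mul, Measure.map_apply (hmeas_h i) (hAmeas (k+1))]
          have hpre : ∀ i, A k ⊆ h i ⁻¹' A (k + 1) := by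
            intro i x hx
            rw [Set.mem_preimage, hAsucc k]
            exact Set.mem_iUnion.2 ⟨i, Set.mem_image_of_mem _ hx⟩
          calc μ B ≤ μ (A k) := ih
            _ = (∑ i, p i) * μ (A k) := by rw [hpsum, one_mul]
            _ = ∑ i, p i * μ (A k) := Finset.sum_mul _ _ _
            _ ≤ ∑ i, p i * μ (h i ⁻¹' A (k + 1)) :=
                Finset.sum_le_sum fun i _ => mul_le_mul_right (measure_mono (hpre i)) _
            _ = μ (A (k + 1)) := happ.symm
    refine ⟨⋂ k, A k, MeasurableSet.iInter fun k => hAmeas k, ?_, ?_⟩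
    · have := hAanti.measure_iInter (μ := μ) (fun k => (hAmeas k).nullMeasurableSet)
        ⟨0, measure_ne_top μ _⟩
      rw [this]
      exact le_iInf hmeasA
    · -- dimension bound
      apply dimH_le
      intro d' hd'
      by_contra hcon
      push_neg at hcon
      -- basic positivity facts
      have hm1 : (1:ℝ) ≤ (m:ℝ) := by exact_mod_cast hm
      have hlogm : 0 ≤ Real.log m := Real.log_nonneg hm1
      have hlogq : 0 < Real.log (1 / q') := Real.log_pos (one_lt_one_div hq'0 hq'1)
      have hv0 : 0 ≤ Real.log m / Real.log (1 / q') := div_nonneg hlogm hlogq.le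
      have hv : Real.log m / Real.log (1 / q') < (d' : ℝ) := by
        have h1 : (ENNReal.ofReal (Real.log ↑m / Real.log (1 / q'))).toReal
            < ((d' : ℝ≥0∞)).toReal :=
          (ENNReal.toReal_lt_toReal ENNReal.ofReal_ne_top ENNReal.coe_ne_top).2 hcon
        rwa [ENNReal.toReal_ofReal hv0, ENNReal.coe_toReal] at h1
      have htd0 : (0:ℝ) < (d' : ℝ) := lt_of_le_of_lt hv0 hv
      have hmq : (m : ℝ) * q' ^ (d' : ℝ) < 1 := by
        have h1 : Real.log m < (d' : ℝ) * Real.log (1 / q') := (div_lt_iff₀ hlogq).1 hv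
        rw [one_div, Real.log_inv] at h1
        have h2 : Real.log m + Real.log q' * (d' : ℝ) < 0 := by nlinarith
        have h3 : (m : ℝ) * q' ^ (d' : ℝ)
            = Real.exp (Real.log m + Real.log q' * (d' : ℝ)) := by
          rw [Real.exp_add, Real.exp_log (by positivity : (0:ℝ) < (m:ℝ)),
            ← Real.rpow_def_of_pos hq'0]
        rw [h3, ← Real.exp_zero]
        exact Real.exp_lt_exp.2 h2
      -- covers
      set td : ℝ := (d' : ℝ) with htd
      set r : ℕ → ℝ≥0∞ := fun k => ENNReal.ofReal (2 * ρ) * ((q : ℝ≥0∞)) ^ k with hr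
      have hrt : Tendsto r atTop (𝓝 0) := by
        have h1 : Tendsto (fun k : ℕ => ((q : ℝ≥0∞)) ^ k) atTop (𝓝 0) :=
          ENNReal.tendsto_pow_atTop_nhds_zero_of_lt_one (by exact_mod_cast hq1)
        have h2 := ENNReal.Tendsto.const_mul h1
          (Or.inr (ENNReal.ofReal_ne_top : ENNReal.ofReal (2 * ρ) ≠ ⊤))
        simpa [hr] using h2
      have hdiamB : EMetric.diam B ≤ ENNReal.ofReal (2 * ρ) := by
        apply EMetric.diam_le
        intro x hx y hy
        rw [edist_dist]
        apply ENNReal.ofReal_le_ofReal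
        rw [hB, Metric.mem_closedBall] at hx hy
        calc dist x y ≤ dist x 0 + dist 0 y := dist_triangle _ _ _
          _ ≤ ρ + ρ := add_le_add hx (by rwa [dist_comm])
          _ = 2 * ρ := by ring
      have hdiam : ∀ k (w : Fin k → Fin m),
          EMetric.diam (itf (List.ofFn w) '' B) ≤ r k := by
        intro k w
        calc EMetric.diam (itf (List.ofFn w) '' B)
            ≤ ↑(q ^ (List.ofFn w).length) * EMetric.diam B :=
              (hitf_lip (List.ofFn w)).ediam_image_le B
          _ = ((q : ℝ≥0∞)) ^ k * EMetric.diam B := by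
              rw [List.length_ofFn, ENNReal.coe_pow]
          _ ≤ ((q : ℝ≥0∞)) ^ k * ENNReal.ofReal (2 * ρ) := mul_le_mul_right hdiamB _
          _ = r k := mul_comm _ _
      have hcover : ∀ k : ℕ, (⋂ j, A j) ⊆ ⋃ w : Fin k → Fin m, itf (List.ofFn w) '' B :=
        fun k => Set.iInter_subset A k
      have hμH := Measure.hausdorffMeasure_le_liminf_sum td (⋂ j, A j) r hrt
        (fun k w => itf (List.ofFn w) '' B) (Eventually.of_forall hdiam)
        (Eventually.of_forall hcover)
      -- the sums tend to zero
      set C0 : ℝ≥0∞ := (ENNReal.ofReal (2 * ρ)) ^ td with hC0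
      set M0 : ℝ≥0∞ := (m : ℝ≥0∞) * ((q : ℝ≥0∞)) ^ td with hM0
      have hM0lt : M0 < 1 := by
        have e1 : ((q : ℝ≥0∞)) ^ td = ENNReal.ofReal (q' ^ td) := by
          rw [← ENNReal.ofReal_rpow_of_pos hq'0]
          congr 1
          exact (ENNReal.ofReal_coe_nnreal).symm
        have e2 : (m : ℝ≥0∞) = ENNReal.ofReal (m : ℝ) := (ENNReal.ofReal_natCast m).symm
        rw [hM0, e1, e2, ← ENNReal.ofReal_mul (by positivity)]
        exact ENNReal.ofReal_lt_one.2 hmq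
      have hbound : ∀ k : ℕ, (∑ w : Fin k → Fin m,
          EMetric.diam (itf (List.ofFn w) '' B) ^ td) ≤ C0 * M0 ^ k := by
        intro k
        have h1 : ∀ w : Fin k → Fin m,
            EMetric.diam (itf (List.ofFn w) '' B) ^ td ≤ (r k) ^ td :=
          fun w => ENNReal.rpow_le_rpow (hdiam k w) htd0.le
        have h2 : (∑ w : Fin k → Fin m, EMetric.diam (itf (List.ofFn w) '' B) ^ td)
            ≤ (Fintype.card (Fin k → Fin m)) • ((r k) ^ td) :=
          Finset.sum_le_card_nsmul _ _ _ (fun w _ => h1 w)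
        have h3 : (Fintype.card (Fin k → Fin m)) • ((r k) ^ td)
            = (m : ℝ≥0∞) ^ k * (r k) ^ td := by
          rw [nsmul_eq_mul, Fintype.card_fun, Fintype.card_fin, Fintype.card_fin]
          norm_cast
        have h4 : (r k) ^ td = C0 * (((q : ℝ≥0∞)) ^ td) ^ k := by
          rw [hr]
          rw [ENNReal.mul_rpow_of_nonneg _ _ htd0.le, hC0]
          congr 1
          rw [← ENNReal.rpow_natCast ((q : ℝ≥0∞)) k, ← ENNReal.rpow_mul,
            ← ENNReal.rpow_natCast (((q : ℝ≥0∞)) ^ td) k, ← ENNReal.rpow_mul]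
          ring_nf
        calc (∑ w : Fin k → Fin m, EMetric.diam (itf (List.ofFn w) '' B) ^ td)
            ≤ (Fintype.card (Fin k → Fin m)) • ((r k) ^ td) := h2
          _ = (m : ℝ≥0∞) ^ k * (r k) ^ td := h3
          _ = C0 * M0 ^ k := by rw [h4, hM0, mul_pow]; ring
      have hC0ne : C0 ≠ ⊤ := ENNReal.rpow_ne_top_of_nonneg htd0.le ENNReal.ofReal_ne_top
      have htends : Tendsto (fun k : ℕ => C0 * M0 ^ k) atTop (𝓝 0) := by
        have h1 : Tendsto (fun k : ℕ => M0 ^ k) atTop (𝓝 0) :=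
          ENNReal.tendsto_pow_atTop_nhds_zero_of_lt_one hM0lt
        simpa using ENNReal.Tendsto.const_mul h1 (Or.inr hC0ne)
      have hliminf : liminf (fun k : ℕ => ∑ w : Fin k → Fin m,
          EMetric.diam (itf (List.ofFn w) '' B) ^ td) atTop = 0 := by
        apply le_antisymm _ zero_le
        calc liminf (fun k : ℕ => ∑ w : Fin k → Fin m,
              EMetric.diam (itf (List.ofFn w) '' B) ^ td) atTop
            ≤ liminf (fun k : ℕ => C0 * M0 ^ k) atTop :=
              liminf_le_liminf (Eventually.of_forall hbound)
          _ = 0 := htends.liminf_eq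
      rw [show (liminf (fun k : ℕ => ∑ w : Fin k → Fin m,
          Metric.ediam (itf (List.ofFn w) '' B) ^ td) atTop) = 0 from hliminf] at hμH
      rw [hd'] at hμH
      simp at hμH
  -- assemble
  choose Λ hΛmeas hΛμ hΛdim using fun j : ℕ => key (ρ₀ + j) (le_add_of_nonneg_right (Nat.cast_nonneg j))
  have hAsetmeas : MeasurableSet (⋃ j, Λ j) := MeasurableSet.iUnion hΛmeas
  have hAset1 : μ (⋃ j, Λ j) = 1 := by
    apply le_antisymm prob_le_one
    have huniv : (Set.univ : Set E) = ⋃ j : ℕ, Metric.closedBall 0 (ρ₀ + j) := by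
      ext x
      simp only [Set.mem_univ, Set.mem_iUnion, Metric.mem_closedBall, dist_zero_right, true_iff]
      obtain ⟨j, hj⟩ := exists_nat_ge (‖x‖ - ρ₀)
      exact ⟨j, by linarith⟩
    have hmono : Monotone (fun j : ℕ => Metric.closedBall (0:E) (ρ₀ + j)) := by
      intro i j hij
      apply Metric.closedBall_subset_closedBall
      have : (i:ℝ) ≤ j := Nat.cast_le.2 hij
      linarith
    calc (1:ℝ≥0∞) = μ Set.univ := (measure_univ).symm
      _ = μ (⋃ j : ℕ, Metric.closedBall 0 (ρ₀ + j)) := by rw [← huniv]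
      _ = ⨆ j : ℕ, μ (Metric.closedBall 0 (ρ₀ + j)) := hmono.measure_iUnion
      _ ≤ μ (⋃ j, Λ j) := iSup_le fun j =>
          (hΛμ j).trans (measure_mono (Set.subset_iUnion Λ j))
  calc upperHausdorffDim μ ≤ dimH (⋃ j, Λ j) := by
        apply iInf_le_of_le (⋃ j, Λ j)
        apply iInf_le_of_le hAsetmeas
        exact iInf_le _ hAset1
    _ ≤ ENNReal.ofReal (Real.log m / Real.log (1 / q')) := by
        rw [dimH_iUnion]
        exact iSup_le hΛdim


set_option maxHeartbeats 1000000 in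
/-- Non-convex robust regression, preconditioned SGD:
for the loss `ℓ(w,(a,y)) = ρ_exp(y − ⟨w,a⟩) + λ_r‖w‖²/2`,
`ρ_exp(t) = 1 − e^{−t²/t₀}`, with `R < √(λ_r t₀ m/(2M))`, preconditioner
`mI ⪯ H ⪯ MI` and step-size `0 < η < m/(λ_r + 2R²/t₀)`, any invariant measure
`μ` of the preconditioned SGD iterated function system with batch size `b`
satisfies `dim̄_H μ ≤ log(n/b) / log(1/(1 − η M⁻¹ λ_r + η m⁻¹ R² (2/t₀)))`. -/
theorem precond_sgd_robust_regression_hausdorff_dim_bound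
    (d n b m : ℕ) (hb : 0 < b) (hnm : n = m * b)
    (a : Fin n → EuclideanSpace ℝ (Fin d)) (y : Fin n → ℝ)
    (lamr t₀ R η : ℝ) (hlamr : 0 < lamr) (ht₀ : 0 < t₀)
    (H : Matrix (Fin d) (Fin d) ℝ) (cm cM : ℝ) (hcm : 0 < cm) (hcmM : cm ≤ cM)
    (hHpd : H.PosDef)
    (hHlow : (H - cm • (1 : Matrix (Fin d) (Fin d) ℝ)).PosSemidef)
    (hHhigh : ((cM • (1 : Matrix (Fin d) (Fin d) ℝ)) - H).PosSemidef)
    (hR : ∀ i, ‖a i‖ ≤ R) (hR0 : 0 ≤ R)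
    (hRbound : R < Real.sqrt (lamr * t₀ * cm / (2 * cM)))
    (hη : 0 < η) (hη' : η < cm / (lamr + 2 * R ^ 2 / t₀))
    (ℓ : EuclideanSpace ℝ (Fin d) → EuclideanSpace ℝ (Fin d) × ℝ → ℝ)
    (hℓ : ∀ w z, ℓ w z = (1 - Real.exp (-(z.2 - ⟪w, z.1⟫) ^ 2 / t₀)) + lamr * ‖w‖ ^ 2 / 2)
    (S : Fin m → Finset (Fin n))
    (hcard : ∀ i, (S i).card = b)
    (hdisj : ∀ i j, i ≠ j → Disjoint (S i) (S j))
    (hcover : ∀ j : Fin n, ∃ i, j ∈ S i)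
    (p : Fin m → ℝ≥0∞) (hp : ∀ i, 0 < p i) (hpsum : ∑ i, p i = 1)
    (h : Fin m → EuclideanSpace ℝ (Fin d) → EuclideanSpace ℝ (Fin d))
    (hdef : ∀ i w, h i w = w - (η / b) •
      Matrix.toEuclideanLin H⁻¹ (∑ j ∈ S i, gradient (fun w' => ℓ w' (a j, y j)) w))
    (μ : Measure (EuclideanSpace ℝ (Fin d))) [IsProbabilityMeasure μ]
    (hinv : μ = ∑ i, p i • μ.map (h i)) :
    upperHausdorffDim μ ≤
      ENNReal.ofReal (Real.log ((n : ℝ) / (b : ℝ)) /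
        Real.log (1 / (1 - η * cM⁻¹ * lamr + η * cm⁻¹ * R ^ 2 * (2 / t₀)))) := by
  -- m is positive
  rcases Nat.eq_zero_or_pos m with hm0 | hm
  · subst hm0
    simp at hpsum
  have hcM : 0 < cM := lt_of_lt_of_le hcm hcmM
  have hbne : (b : ℝ) ≠ 0 := Nat.cast_ne_zero.2 hb.ne'
  set q' : ℝ := 1 - η * cM⁻¹ * lamr + η * cm⁻¹ * R ^ 2 * (2 / t₀) with hq'def
  -- step size bound
  have hden : (0:ℝ) < lamr + 2 * R ^ 2 / t₀ := by positivity
  have hηlamr : η * lamr < cm := by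
    have h1 : η * (lamr + 2 * R ^ 2 / t₀) < cm := (lt_div_iff₀ hden).1 hη'
    nlinarith [mul_nonneg hη.le (by positivity : (0:ℝ) ≤ 2 * R ^ 2 / t₀)]
  have hηlamrM : η * lamr < cM := lt_of_lt_of_le hηlamr hcmM
  have hfrac : η * cM⁻¹ * lamr < 1 := by
    rw [show η * cM⁻¹ * lamr = (η * lamr) / cM by ring]
    exact (div_lt_one hcM).2 hηlamrM
  have hq'0 : 0 < q' := by
    have hnn : (0:ℝ) ≤ η * cm⁻¹ * R ^ 2 * (2 / t₀) := by positivity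
    rw [hq'def]; linarith
  have hq'1 : q' < 1 := by
    have hXpos : (0:ℝ) < lamr * t₀ * cm / (2 * cM) := by positivity
    have hR2 : R ^ 2 < lamr * t₀ * cm / (2 * cM) := (Real.lt_sqrt hR0).1 hRbound
    have hX : R ^ 2 * (2 * cM) < lamr * t₀ * cm := (lt_div_iff₀ (by positivity)).1 hR2
    have h2 : η * cm⁻¹ * R ^ 2 * (2 / t₀) < η * cM⁻¹ * lamr := by
      rw [show η * cm⁻¹ * R ^ 2 * (2 / t₀) = (η * (R ^ 2 * 2)) / (cm * t₀) by
            field_simp,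
          show η * cM⁻¹ * lamr = (η * lamr) / cM by ring,
          div_lt_div_iff₀ (by positivity) hcM]
      nlinarith [mul_lt_mul_of_pos_left hX hη]
    rw [hq'def]; linarith
  set q : ℝ≥0 := ⟨q', hq'0.le⟩ with hqdef
  have hq0 : 0 < q := by exact_mod_cast hq'0
  have hq1 : q < 1 := by exact_mod_cast hq'1
  -- gradient formula
  have hgrad : ∀ (j : Fin n) (w : EuclideanSpace ℝ (Fin d)),
      gradient (fun w' => ℓ w' (a j, y j)) w =
        (-(2 * (y j - ⟪w, a j⟫) / t₀ * Real.exp (-(y j - ⟪w, a j⟫) ^ 2 / t₀))) • a j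
          + lamr • w := by
    intro j w
    have hfun : (fun w' => ℓ w' (a j, y j)) = fun w' : EuclideanSpace ℝ (Fin d) =>
        (1 - Real.exp (-(y j - ⟪w', a j⟫) ^ 2 / t₀)) + lamr * ‖w'‖ ^ 2 / 2 :=
      funext fun w' => hℓ w' (a j, y j)
    rw [hfun]
    exact (grad_formula t₀ lamr (a j) (y j) w).gradient
  -- Lipschitz bound
  have hlip : ∀ i, LipschitzWith q (h i) := by
    intro i
    apply LipschitzWith.of_dist_le_mul
    intro w₁ w₂
    rw [dist_eq_norm, dist_eq_norm]
    have hcoe : (q : ℝ) = q' := rfl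
    rw [hcoe, hdef i w₁, hdef i w₂]
    simp only [hgrad]
    exact step_lip t₀ lamr η R b hb ht₀ hlamr hcm hcM hη hηlamr.le hHpd hHlow hHhigh
      (S i) (hcard i) a y (fun j _ => hR j) hR0 w₁ w₂
  have hnb : (n : ℝ) / (b : ℝ) = (m : ℝ) := by
    rw [hnm]
    push_cast
    field_simp
  rw [hnb]
  exact ifs_dim_bound hm h q hq0 hq1 hlip p hpsum μ hinv
end

section
/- Consider the regularized least squares loss ℓ(w,(a,y)) = (aᵀw − y)²/2 + λ‖w‖²/2 with λ > 0 and data z_i = (a_i,y_i), and the stochastic Newton iterated function system with batch size b: partition {1,…,n} into m_b = n/b batches S_1,…,S_{m_b} each of size b, and set h_i(w) = w − η H̃_i^{−1} ((1/b) ∑_{j∈S_i} ∇_w ℓ(w,z_j)), where H̃_i = (1/b)∑_{j∈S_i} a_j a_jᵀ + λI is the mini-batch Hessian; explicitly h_i(w) = (1 − η)w + (η/b) H̃_i^{−1} ∑_{j∈S_i} a_j y_j. For any step-size η ∈ (0,1), every Borel probability measure μ on ℝ^d invariant under this iterated function system satisfies dim̄_H μ ≤ log(n/b) / log(1/(1 −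 η)). -/
open MeasureTheory Filter Topology
open scoped ENNReal NNReal RealInnerProductSpace Matrix

lemma vecMulVec_mulVec' {d : ℕ} (u v x : Fin d → ℝ) :
    Matrix.vecMulVec u v *ᵥ x = (v ⬝ᵥ x) • u := by
  funext k
  simp only [Matrix.mulVec, Matrix.vecMulVec_apply, dotProduct, Pi.smul_apply,
    smul_eq_mul, Finset.sum_mul]
  exact Finset.sum_congr rfl fun j _ => by ring

lemma inner_eq_dot {d : ℕ} (u w : EuclideanSpace ℝ (Fin d)) :
    ⟪u, w⟫ = (fun k => u k) ⬝ᵥ (fun k => w k) := by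
  simp [PiLp.inner_apply, RCLike.inner_apply, dotProduct, mul_comm]

lemma euclid_vecMulVec_apply {d : ℕ} (u w : EuclideanSpace ℝ (Fin d)) :
    Matrix.toEuclideanLin (Matrix.vecMulVec (fun k => u k) (fun k => u k)) w = ⟪u, w⟫ • u := by
  ext k
  rw [Matrix.toEuclideanLin_apply]
  rw [show w.ofLp = (fun k => w k) from rfl, vecMulVec_mulVec',
    inner_eq_dot]
  rfl

lemma euclid_one_apply {d : ℕ} (w : EuclideanSpace ℝ (Fin d)) :
    Matrix.toEuclideanLin (1 : Matrix (Fin d) (Fin d) ℝ) w = w := by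
  ext k
  rw [Matrix.toEuclideanLin_apply]
  simp [Matrix.one_mulVec]

lemma sum_mulVec' {d : ℕ} {ι : Type*} (s : Finset ι) (M : ι → Matrix (Fin d) (Fin d) ℝ)
    (x : Fin d → ℝ) : (∑ j ∈ s, M j) *ᵥ x = ∑ j ∈ s, M j *ᵥ x := by
  funext k
  simp only [Matrix.mulVec, dotProduct, Finset.sum_apply, Matrix.sum_apply,
    Finset.sum_mul]
  exact Finset.sum_comm

lemma dotProduct_sum' {d : ℕ} {ι : Type*} (s : Finset ι) (x : Fin d → ℝ) (v : ι → Fin d → ℝ) :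
    x ⬝ᵥ ∑ j ∈ s, v j = ∑ j ∈ s, x ⬝ᵥ v j := by
  simp only [dotProduct, Finset.sum_apply, Finset.mul_sum]
  exact Finset.sum_comm

lemma grad_formula_s13 {E : Type*} [NormedAddCommGroup E] [InnerProductSpace ℝ E] [CompleteSpace E]
    (a : E) (yy lam : ℝ) (w : E) :
    HasGradientAt (fun w' => (⟪a, w'⟫ - yy) ^ 2 / 2 + lam * ‖w'‖ ^ 2 / 2)
      ((⟪a, w⟫ - yy) • a + lam • w) w := by
  rw [hasGradientAt_iff_hasFDerivAt]
  have h1 : HasFDerivAt (fun w' : E => ⟪a, w'⟫ - yy) (innerSL ℝ a) w :=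
    (innerSL ℝ a).hasFDerivAt.sub_const yy
  have hAB := (h1.mul h1).const_mul (2⁻¹ : ℝ) |>.add
    (((hasFDerivAt_id w).inner ℝ (hasFDerivAt_id w)).const_mul (lam/2))
  have hfun : (fun w' : E => (⟪a, w'⟫ - yy) ^ 2 / 2 + lam * ‖w'‖ ^ 2 / 2)
      = fun w' : E => 2⁻¹ * ((⟪a, w'⟫ - yy) * (⟪a, w'⟫ - yy)) + lam/2 * ⟪w', w'⟫ := by
    funext w'
    rw [← real_inner_self_eq_norm_sq]
    ring
  rw [hfun]
  refine hAB.congr_fderiv ?_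
  ext u
  simp only [InnerProductSpace.toDual_apply_apply, ContinuousLinearMap.add_apply,
    ContinuousLinearMap.smul_apply, ContinuousLinearMap.comp_apply,
    ContinuousLinearMap.prod_apply, ContinuousLinearMap.coe_id', id_eq,
    fderivInnerCLM_apply, innerSL_apply_apply, inner_add_left, real_inner_smul_left,
    smul_eq_mul]
  rw [real_inner_comm u w]
  ring

lemma key_affine {d n b m : ℕ} (hb : 0 < b)
    (a : Fin n → EuclideanSpace ℝ (Fin d)) (y : Fin n → ℝ)
    (lam η : ℝ) (hlam : 0 < lam)
    (ℓ : EuclideanSpace ℝ (Fin d) → EuclideanSpace ℝ (Fin d) × ℝ → ℝ)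
    (hℓ : ∀ w z, ℓ w z = (⟪z.1, w⟫ - z.2) ^ 2 / 2 + lam * ‖w‖ ^ 2 / 2)
    (S : Fin m → Finset (Fin n)) (hcard : ∀ i, (S i).card = b)
    (Ht : Fin m → Matrix (Fin d) (Fin d) ℝ)
    (hHt : ∀ i, Ht i = ((b : ℝ)⁻¹ • ∑ j ∈ S i,
      Matrix.vecMulVec (fun k => a j k) (fun k => a j k))
        + lam • (1 : Matrix (Fin d) (Fin d) ℝ))
    (h : Fin m → EuclideanSpace ℝ (Fin d) → EuclideanSpace ℝ (Fin d))
    (hdef : ∀ i w, h i w = w - η • Matrix.toEuclideanLin (Ht i)⁻¹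
      ((b : ℝ)⁻¹ • ∑ j ∈ S i, gradient (fun w' => ℓ w' (a j, y j)) w)) :
    ∀ i w, h i w = (1 - η) • w +
      η • (Matrix.toEuclideanLin (Ht i)⁻¹ ((b : ℝ)⁻¹ • ∑ j ∈ S i, y j • a j)) := by
  have hb' : (b : ℝ) ≠ 0 := Nat.cast_ne_zero.mpr hb.ne'
  intro i w
  -- Hermitian
  have hherm : (Ht i)ᴴ = Ht i := by
    ext k l
    simp [hHt i, Matrix.conjTranspose_apply, Matrix.one_apply, Matrix.vecMulVec_apply,
      Matrix.sum_apply, mul_comm, eq_comm]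
  -- positive definite
  have hPD : (Ht i).PosDef := by
    refine Matrix.PosDef.of_dotProduct_mulVec_pos hherm fun x hx => ?_
    have hxx : 0 < x ⬝ᵥ x :=
      lt_of_le_of_ne (Finset.sum_nonneg fun _ _ => mul_self_nonneg _)
        (fun h0 => hx (dotProduct_self_eq_zero.mp h0.symm))
    rw [hHt i, Matrix.add_mulVec, Matrix.smul_mulVec, Matrix.smul_mulVec,
      Matrix.one_mulVec, star_trivial, dotProduct_add, dotProduct_smul,
      dotProduct_smul, sum_mulVec']
    have hsum0 : 0 ≤ x ⬝ᵥ ∑ j ∈ S i, Matrix.vecMulVec (fun k => a j k) (fun k => a j k) *ᵥ x := by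
      rw [dotProduct_sum']
      refine Finset.sum_nonneg fun j _ => ?_
      rw [vecMulVec_mulVec', dotProduct_smul, smul_eq_mul,
        dotProduct_comm]
      exact mul_self_nonneg _
    have h1 : (0:ℝ) ≤ (b : ℝ)⁻¹ • (x ⬝ᵥ ∑ j ∈ S i, Matrix.vecMulVec (fun k => a j k) (fun k => a j k) *ᵥ x) :=
      smul_nonneg (by positivity) hsum0
    have h2 : (0:ℝ) < lam • (x ⬝ᵥ x) := smul_pos hlam hxx
    linarith [h1, h2]
  have hU : IsUnit (Ht i).det := hPD.det_pos.ne'.isUnit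
  have hinvmul : (Ht i)⁻¹ * Ht i = 1 := Matrix.nonsing_inv_mul _ hU
  have hleft : ∀ x : EuclideanSpace ℝ (Fin d),
      Matrix.toEuclideanLin (Ht i)⁻¹ (Matrix.toEuclideanLin (Ht i) x) = x := by
    intro x
    rw [Matrix.toEuclideanLin_apply, Matrix.toEuclideanLin_apply]
    rw [WithLp.ofLp_toLp, Matrix.mulVec_mulVec, hinvmul, Matrix.one_mulVec,
      WithLp.toLp_ofLp]
  have hHtw : Matrix.toEuclideanLin (Ht i) w
      = (b : ℝ)⁻¹ • (∑ j ∈ S i, ⟪a j, w⟫ • a j) + lam • w := by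
    rw [hHt i]
    simp only [map_add, _root_.map_smul, map_sum, LinearMap.add_apply, LinearMap.smul_apply,
      LinearMap.coe_sum, Finset.sum_apply, euclid_vecMulVec_apply, euclid_one_apply]
  have hgrad : ∀ j, gradient (fun w' => ℓ w' (a j, y j)) w
      = (⟪a j, w⟫ - y j) • a j + lam • w := by
    intro j
    have hfun : (fun w' => ℓ w' (a j, y j))
        = fun w' => (⟪a j, w'⟫ - y j) ^ 2 / 2 + lam * ‖w'‖ ^ 2 / 2 :=
      funext fun w' => hℓ w' (a j, y j)
    rw [hfun]
    exact (grad_formula_s13 (a j) (y j) lam w).gradient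
  have hsum : ((b : ℝ)⁻¹ • ∑ j ∈ S i, gradient (fun w' => ℓ w' (a j, y j)) w)
      = Matrix.toEuclideanLin (Ht i) w - (b : ℝ)⁻¹ • ∑ j ∈ S i, y j • a j := by
    rw [hHtw]
    simp only [hgrad, sub_smul]
    rw [Finset.sum_add_distrib, Finset.sum_sub_distrib, Finset.sum_const, hcard i]
    rw [smul_add, smul_sub]
    have hbb : (b : ℝ)⁻¹ • (b • (lam • w)) = lam • w := by
      rw [← Nat.cast_smul_eq_nsmul ℝ, smul_smul, inv_mul_cancel₀ hb', one_smul]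
    rw [hbb]
    abel
  rw [hdef i w, hsum, map_sub, hleft w]
  rw [smul_sub, sub_smul, one_smul]
  abel


/-- Images of a set under words of maps from an IFS. -/
def wordImage {X : Type*} {ι : Type*} (h : ι → X → X) (B : Set X) : ∀ k : ℕ, (Fin k → ι) → Set X
  | 0, _ => B
  | (k+1), f => h (f 0) '' wordImage h B k (f ∘ Fin.succ)

lemma wordImage_diam {X : Type*} [PseudoEMetricSpace X] {ι : Type*} (h : ι → X → X) {r : ℝ≥0}
    (hlip : ∀ i, LipschitzWith r (h i)) (B : Set X) :
    ∀ (k : ℕ) (f : Fin k → ι),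
      EMetric.diam (wordImage h B k f) ≤ (r : ℝ≥0∞) ^ k * EMetric.diam B
  | 0, _ => by simp [wordImage]
  | (k+1), f => by
    calc EMetric.diam (wordImage h B (k+1) f)
        ≤ (r : ℝ≥0∞) * EMetric.diam (wordImage h B k (f ∘ Fin.succ)) :=
          (hlip (f 0)).ediam_image_le _
      _ ≤ (r : ℝ≥0∞) * ((r : ℝ≥0∞) ^ k * EMetric.diam B) := by
          gcongr
          exact wordImage_diam h hlip B k _
      _ = (r : ℝ≥0∞) ^ (k+1) * EMetric.diam B := by ring

lemma iterate_subset_wordImage {X : Type*} {ι : Type*} [Fintype ι] (h : ι → X → X) (B : Set X) :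
    ∀ k : ℕ, (fun A => ⋃ i, h i '' A)^[k] B ⊆ ⋃ f : Fin k → ι, wordImage h B k f
  | 0 => fun x hx => Set.mem_iUnion.mpr ⟨Fin.elim0, hx⟩
  | (k+1) => by
    rw [Function.iterate_succ_apply']
    refine Set.iUnion_subset fun i => ?_
    refine (Set.image_mono (iterate_subset_wordImage h B k)).trans ?_
    rw [Set.image_iUnion]
    refine Set.iUnion_subset fun f => ?_
    refine Set.subset_iUnion_of_subset (Fin.cons i f) ?_
    have hcomp : (Fin.cons i f ∘ Fin.succ : Fin k → ι) = f := funext fun j => by simp [Fin.cons_succ]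
    have : wordImage h B (k+1) (Fin.cons i f) = h i '' wordImage h B k f := by
      conv_lhs => rw [wordImage]
      rw [hcomp]
      simp
    rw [this]

lemma dimH_IFS {X : Type*} [MetricSpace X] [MeasurableSpace X] [BorelSpace X]
    {ι : Type*} [Fintype ι] [Nonempty ι] (h : ι → X → X) {r : ℝ≥0}
    (hr0 : (0:ℝ) < r) (hr1 : (r:ℝ) < 1)
    (hlip : ∀ i, LipschitzWith r (h i)) (B : Set X) (hB : EMetric.diam B ≠ ∞) :
    dimH (⋂ k : ℕ, (fun A => ⋃ i, h i '' A)^[k] B)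
      ≤ ENNReal.ofReal (Real.log (Fintype.card ι) / Real.log (1/(r:ℝ))) := by
  set N := Fintype.card ι with hNdef
  set K := ⋂ k : ℕ, (fun A => ⋃ i, h i '' A)^[k] B with hKdef
  have hN : 1 ≤ (N:ℝ) := by exact_mod_cast Fintype.card_pos
  have hlogr : 0 < Real.log (1/(r:ℝ)) := Real.log_pos (one_lt_one_div hr0 hr1)
  set s := Real.log (N:ℝ) / Real.log (1/(r:ℝ)) with hsdef
  have hs0 : 0 ≤ s := div_nonneg (Real.log_nonneg hN) hlogr.le
  refine dimH_le fun d' hd' => ?_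
  by_contra hlt
  push_neg at hlt
  have hs' : s < (d' : ℝ) := by
    rw [← ENNReal.ofReal_coe_nnreal] at hlt
    exact (ENNReal.ofReal_lt_ofReal_iff_of_nonneg hs0).mp hlt
  have hd0 : (0:ℝ) ≤ (d' : ℝ) := d'.coe_nonneg
  -- the ratio of the geometric bound
  have hq_real : (N:ℝ) * (r:ℝ) ^ (d':ℝ) < 1 := by
    have hlog1 : Real.log ((N:ℝ) * (r:ℝ) ^ (d':ℝ))
        = Real.log (N:ℝ) + (d':ℝ) * Real.log (r:ℝ) := by
      rw [Real.log_mul (by positivity) (by positivity), Real.log_rpow hr0]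
    have hlog2 : Real.log (1/(r:ℝ)) = -Real.log (r:ℝ) := by
      rw [one_div, Real.log_inv]
    have h3 : Real.log (N:ℝ) < (d':ℝ) * Real.log (1/(r:ℝ)) := (div_lt_iff₀ hlogr).mp hs'
    refine (Real.log_neg_iff (by positivity)).mp ?_
    rw [hlog1]
    rw [hlog2] at h3
    linarith
  set q : ℝ≥0∞ := (N : ℝ≥0∞) * (r : ℝ≥0∞) ^ (d':ℝ) with hqdef
  have hq_of : q = ENNReal.ofReal ((N:ℝ) * (r:ℝ) ^ (d':ℝ)) := by
    rw [ENNReal.ofReal_mul (by positivity), ← ENNReal.ofReal_rpow_of_pos hr0,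
      ENNReal.ofReal_coe_nnreal, ENNReal.ofReal_natCast]
  have hq1 : q < 1 := by
    rw [hq_of]
    exact ENNReal.ofReal_lt_one.mpr hq_real
  have hrlt : (r : ℝ≥0∞) < 1 := by
    rw [← ENNReal.coe_one, ENNReal.coe_lt_coe]
    exact_mod_cast hr1
  -- covering bound
  have htend : Tendsto (fun k : ℕ => (r : ℝ≥0∞) ^ k * EMetric.diam B) atTop (𝓝 0) := by
    have := ENNReal.Tendsto.mul_const (ENNReal.tendsto_pow_atTop_nhds_zero_of_lt_one hrlt)
      (b := EMetric.diam B) (Or.inr hB)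
    simpa using this
  have cover := Measure.hausdorffMeasure_le_liminf_sum (d' : ℝ) K
    (fun k : ℕ => (r : ℝ≥0∞) ^ k * EMetric.diam B) htend
    (fun k (f : Fin k → ι) => wordImage h B k f)
    (Eventually.of_forall fun k f => wordImage_diam h hlip B k f)
    (Eventually.of_forall fun k =>
      (Set.iInter_subset _ k).trans (iterate_subset_wordImage h B k))
  have hDne : EMetric.diam B ^ (d':ℝ) ≠ ∞ := ENNReal.rpow_ne_top_of_nonneg hd0 hB
  have hble : ∀ k : ℕ, (∑ f : Fin k → ι, EMetric.diam (wordImage h B k f) ^ (d':ℝ))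
      ≤ q ^ k * EMetric.diam B ^ (d':ℝ) := by
    intro k
    calc (∑ f : Fin k → ι, EMetric.diam (wordImage h B k f) ^ (d':ℝ))
        ≤ ∑ _f : Fin k → ι, ((r : ℝ≥0∞) ^ k * EMetric.diam B) ^ (d':ℝ) :=
          Finset.sum_le_sum fun f _ =>
            ENNReal.rpow_le_rpow (wordImage_diam h hlip B k f) hd0
      _ = (Fintype.card (Fin k → ι)) * ((r : ℝ≥0∞) ^ k * EMetric.diam B) ^ (d':ℝ) := by
          rw [Finset.sum_const, Finset.card_univ, nsmul_eq_mul]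
      _ = q ^ k * EMetric.diam B ^ (d':ℝ) := by
          rw [Fintype.card_fun, Fintype.card_fin]
          rw [ENNReal.mul_rpow_of_ne_top (by exact ENNReal.pow_ne_top ENNReal.coe_ne_top) hB]
          rw [← ENNReal.rpow_natCast (r : ℝ≥0∞) k, ← ENNReal.rpow_mul, mul_comm (k:ℝ) (d':ℝ),
            ENNReal.rpow_mul, ENNReal.rpow_natCast]
          rw [hqdef, mul_pow]
          push_cast
          ring
  have htend2 : Tendsto (fun k : ℕ => q ^ k * EMetric.diam B ^ (d':ℝ)) atTop (𝓝 0) := by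
    have := ENNReal.Tendsto.mul_const (ENNReal.tendsto_pow_atTop_nhds_zero_of_lt_one hq1)
      (b := EMetric.diam B ^ (d':ℝ)) (Or.inr hDne)
    simpa using this
  have hzero : μH[(d':ℝ)] K = 0 := by
    refine le_antisymm ?_ (zero_le)
    refine cover.trans ?_
    have hlim : liminf (fun k : ℕ => ∑ f : Fin k → ι,
        EMetric.diam (wordImage h B k f) ^ (d':ℝ)) atTop
        ≤ liminf (fun k : ℕ => q ^ k * EMetric.diam B ^ (d':ℝ)) atTop :=
      liminf_le_liminf (Eventually.of_forall hble)
    rw [htend2.liminf_eq] at hlim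
    exact hlim
  rw [hzero] at hd'
  exact (by simp at hd' : False)

/-- Least squares, stochastic Newton: for the regularized
least squares loss and the stochastic Newton iterated function system
`h_i(w) = w − η H̃_i⁻¹ ((1/b) ∑_{j ∈ S_i} ∇ℓ(w, z_j))` with mini-batch Hessian
`H̃_i = (1/b) ∑_{j ∈ S_i} a_j a_jᵀ + λ I`, any step-size `η ∈ (0,1)` and any
invariant measure `μ` satisfy `dim̄_H μ ≤ log(n/b) / log(1/(1 − η))`. -/
theorem stochastic_newton_least_squares_hausdorff_dim_bound
    (d n b m : ℕ) (hb : 0 < b) (hnm : n = m * b)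
    (a : Fin n → EuclideanSpace ℝ (Fin d)) (y : Fin n → ℝ)
    (lam η : ℝ) (hlam : 0 < lam)
    (hη : 0 < η) (hη' : η < 1)
    (ℓ : EuclideanSpace ℝ (Fin d) → EuclideanSpace ℝ (Fin d) × ℝ → ℝ)
    (hℓ : ∀ w z, ℓ w z = (⟪z.1, w⟫ - z.2) ^ 2 / 2 + lam * ‖w‖ ^ 2 / 2)
    (S : Fin m → Finset (Fin n))
    (hcard : ∀ i, (S i).card = b)
    (hdisj : ∀ i j, i ≠ j → Disjoint (S i) (S j))
    (hcover : ∀ j : Fin n, ∃ i, j ∈ S i)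
    (Ht : Fin m → Matrix (Fin d) (Fin d) ℝ)
    (hHt : ∀ i, Ht i = ((b : ℝ)⁻¹ • ∑ j ∈ S i,
      Matrix.vecMulVec (fun k => a j k) (fun k => a j k))
        + lam • (1 : Matrix (Fin d) (Fin d) ℝ))
    (p : Fin m → ℝ≥0∞) (hp : ∀ i, 0 < p i) (hpsum : ∑ i, p i = 1)
    (h : Fin m → EuclideanSpace ℝ (Fin d) → EuclideanSpace ℝ (Fin d))
    (hdef : ∀ i w, h i w = w - η • Matrix.toEuclideanLin (Ht i)⁻¹
      ((b : ℝ)⁻¹ • ∑ j ∈ S i, gradient (fun w' => ℓ w' (a j, y j)) w))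
    (μ : Measure (EuclideanSpace ℝ (Fin d))) [IsProbabilityMeasure μ]
    (hinv : μ = ∑ i, p i • μ.map (h i)) :
    upperHausdorffDim μ ≤
      ENNReal.ofReal (Real.log ((n : ℝ) / (b : ℝ)) / Real.log (1 / (1 - η))) := by
  classical
  have key := key_affine hb a y lam η hlam ℓ hℓ S hcard Ht hHt h hdef
  have hm : 0 < m := by
    rcases Nat.eq_zero_or_pos m with h0 | h0
    · subst h0; simp at hpsum
    · exact h0
  haveI : Nonempty (Fin m) := Fin.pos_iff_nonempty.mp hm
  set v : Fin m → EuclideanSpace ℝ (Fin d) :=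
    fun i => Matrix.toEuclideanLin (Ht i)⁻¹ ((b : ℝ)⁻¹ • ∑ j ∈ S i, y j • a j) with hv
  set r : ℝ≥0 := ⟨1 - η, by linarith⟩ with hrdef
  have hrc : (r : ℝ) = 1 - η := rfl
  have hr0 : (0:ℝ) < r := by rw [hrc]; linarith
  have hr1 : (r:ℝ) < 1 := by rw [hrc]; linarith
  have hlip : ∀ i, LipschitzWith r (h i) := by
    intro i
    refine LipschitzWith.of_dist_le_mul fun w w' => ?_
    rw [dist_eq_norm, key i w, key i w']
    have heq : ((1-η) • w + η • v i) - ((1-η) • w' + η • v i) = (1-η) • (w - w') := by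
      module
    rw [heq, norm_smul, Real.norm_of_nonneg (by linarith), dist_eq_norm, hrc]
  have hcont : ∀ i, Continuous (h i) := fun i => (hlip i).continuous
  set T : Set (EuclideanSpace ℝ (Fin d)) → Set (EuclideanSpace ℝ (Fin d)) :=
    fun A => ⋃ i, h i '' A with hT
  have hstep : ∀ A : Set (EuclideanSpace ℝ (Fin d)), MeasurableSet (T A) → μ A ≤ μ (T A) := by
    intro A hA
    have hTA : μ (T A) = ∑ i, p i * μ ((h i) ⁻¹' (T A)) := by
      conv_lhs => rw [hinv]
      rw [Measure.finset_sum_apply]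
      exact Finset.sum_congr rfl fun i _ => by
        rw [Measure.smul_apply, Measure.map_apply (hcont i).measurable hA, smul_eq_mul]
    rw [hTA]
    calc μ A = (∑ i, p i) * μ A := by rw [hpsum, one_mul]
      _ = ∑ i, p i * μ A := Finset.sum_mul _ _ _
      _ ≤ ∑ i, p i * μ ((h i) ⁻¹' (T A)) := Finset.sum_le_sum fun i _ =>
          mul_le_mul_right (measure_mono fun x hx => Set.mem_preimage.mpr
            (Set.mem_iUnion.mpr ⟨i, Set.mem_image_of_mem _ hx⟩)) _
  set C : ℝ := ∑ i, ‖v i‖ with hC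
  have hvC : ∀ i, ‖v i‖ ≤ C :=
    fun i => Finset.single_le_sum (fun j _ => norm_nonneg (v j)) (Finset.mem_univ i)
  have hC0 : 0 ≤ C := Finset.sum_nonneg fun i _ => norm_nonneg _
  set R : ℕ → ℝ := fun t => max (t:ℝ) C with hR
  set B : ℕ → Set (EuclideanSpace ℝ (Fin d)) := fun t => Metric.closedBall 0 (R t) with hB
  have hTB : ∀ t, T (B t) ⊆ B t := by
    intro t
    refine Set.iUnion_subset fun i => ?_
    rintro _ ⟨w, hw, rfl⟩
    simp only [hB, Metric.mem_closedBall, dist_zero_right] at hw ⊢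
    rw [key i w]
    calc ‖(1-η) • w + η • v i‖ ≤ (1-η) * ‖w‖ + η * ‖v i‖ := by
          refine (norm_add_le _ _).trans ?_
          rw [norm_smul, norm_smul, Real.norm_of_nonneg (by linarith : (0:ℝ) ≤ 1-η),
            Real.norm_of_nonneg hη.le]
      _ ≤ (1-η) * R t + η * C := by
          have h1 := mul_le_mul_of_nonneg_left hw (by linarith : (0:ℝ) ≤ 1-η)
          have h2 := mul_le_mul_of_nonneg_left (hvC i) hη.le
          linarith
      _ ≤ (1-η) * R t + η * R t := by
          have := mul_le_mul_of_nonneg_left (le_max_right (t:ℝ) C) hη.le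
          linarith
      _ = R t := by ring
  have hTcomp : ∀ A : Set (EuclideanSpace ℝ (Fin d)), IsCompact A → IsCompact (T A) :=
    fun A hA => isCompact_iUnion fun i => hA.image (hcont i)
  have hiter_comp : ∀ t k, IsCompact (T^[k] (B t)) := by
    intro t k
    induction k with
    | zero => simpa using isCompact_closedBall (0 : EuclideanSpace ℝ (Fin d)) (R t)
    | succ k ih => rw [Function.iterate_succ_apply']; exact hTcomp _ ih
  have hTmono : Monotone T := fun A A' hAA => Set.iUnion_mono fun i => Set.image_mono hAA
  have hanti : ∀ t, Antitone (fun k => T^[k] (B t)) := by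
    intro t
    refine antitone_nat_of_succ_le fun k => ?_
    rw [Function.iterate_succ_apply]
    exact hTmono.iterate k (hTB t)
  set K : ℕ → Set (EuclideanSpace ℝ (Fin d)) := fun t => ⋂ k, T^[k] (B t) with hK
  have hKmeas : ∀ t, MeasurableSet (K t) :=
    fun t => MeasurableSet.iInter fun k => (hiter_comp t k).isClosed.measurableSet
  have hμiter : ∀ t k, μ (B t) ≤ μ (T^[k] (B t)) := by
    intro t k
    induction k with
    | zero => simp
    | succ k ih =>
      rw [Function.iterate_succ_apply']
      exact ih.trans (hstep _ (hTcomp _ (hiter_comp t k)).isClosed.measurableSet)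
  have hμK : ∀ t, μ (B t) ≤ μ (K t) := by
    intro t
    rw [hK]
    rw [(hanti t).measure_iInter
      (fun k => ((hiter_comp t k).isClosed.measurableSet).nullMeasurableSet)
      ⟨0, measure_ne_top μ _⟩]
    exact le_iInf (hμiter t)
  have hdimK : ∀ t, dimH (K t)
      ≤ ENNReal.ofReal (Real.log (m:ℝ) / Real.log (1/(1-η))) := by
    intro t
    have hdiam : EMetric.diam (B t) ≠ ∞ := Metric.isBounded_closedBall.ediam_ne_top
    have := dimH_IFS h hr0 hr1 hlip (B t) hdiam
    simpa [Fintype.card_fin, hrc] using this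
  set F : Set (EuclideanSpace ℝ (Fin d)) := ⋃ t : ℕ, K t with hF
  have hFmeas : MeasurableSet F := MeasurableSet.iUnion hKmeas
  have hμF : μ F = 1 := by
    refine le_antisymm prob_le_one ?_
    have hBmono : Monotone B := by
      intro t t' htt'
      exact Metric.closedBall_subset_closedBall
        (max_le_max (by exact_mod_cast htt') le_rfl)
    have hBunion : (⋃ t : ℕ, B t) = Set.univ := by
      refine Set.eq_univ_iff_forall.mpr fun x => ?_
      obtain ⟨t, ht⟩ := exists_nat_ge ‖x‖
      exact Set.mem_iUnion.mpr ⟨t, by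
        simp only [hB, Metric.mem_closedBall, dist_zero_right]
        exact ht.trans (le_max_left _ _)⟩
    have h1 : (1:ℝ≥0∞) = ⨆ t, μ (B t) := by
      rw [← hBmono.measure_iUnion, hBunion, measure_univ]
    rw [h1]
    exact iSup_le fun t => (hμK t).trans (measure_mono (Set.subset_iUnion K t))
  have hfinal : upperHausdorffDim μ ≤ dimH F := by
    refine iInf_le_of_le F ?_
    refine iInf_le_of_le hFmeas ?_
    exact iInf_le_of_le hμF le_rfl
  refine hfinal.trans ?_
  have hnb : Real.log ((n:ℝ)/(b:ℝ)) = Real.log (m:ℝ) := by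
    congr 1
    rw [hnm]
    push_cast
    field_simp
  rw [hF, dimH_iUnion, hnb]
  exact iSup_le hdimK
end
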